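/- Let g : ℝⁿ → ℝ be convex and L-Lipschitz with ∫ exp(−g(x)) dx = 1, let λ > 0, and let g^λ be the Moreau–Yosida envelope of g. Then 1 ≤ ∫ exp(−g^λ(z)) dz ≤ exp(L²λ/2). -/

import Mathlib

open MeasureTheory

/-- The Moreau–Yosida envelope of `g` with parameter `lam`. -/
noncomputable def mye {n : ℕ} (g : EuclideanSpace ℝ (Fin n) → ℝ) (lam : ℝ)
    (x : EuclideanSpace ℝ (Fin n)) : ℝ :=
  ⨅ z : EuclideanSpace ℝ (Fin n), (g z + ‖x - z‖ ^ 2 / (2 * lam))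

theorem stmt_9 {n : ℕ} (g : EuclideanSpace ℝ (Fin n) → ℝ) (L lam : ℝ)
    (hconv : ConvexOn ℝ Set.univ g)
    (hLip : ∀ x y, |g x - g y| ≤ L * ‖x - y‖)
    (hlam : 0 < lam)
    (hnorm : ∫ x : EuclideanSpace ℝ (Fin n), Real.exp (-g x) = 1) :
    1 ≤ (∫ z : EuclideanSpace ℝ (Fin n), Real.exp (-(mye g lam z))) ∧
    (∫ z : EuclideanSpace ℝ (Fin n), Real.exp (-(mye g lam z))) ≤
      Real.exp (L ^ 2 * lam / 2) := by
  have hlam2 : (0:ℝ) < 2 * lam := by linarith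
  -- pointwise lower bound for the inf terms
  have hlow : ∀ x z : EuclideanSpace ℝ (Fin n),
      g x - L ^ 2 * lam / 2 ≤ g z + ‖x - z‖ ^ 2 / (2 * lam) := by
    intro x z
    have h1 : g x - g z ≤ L * ‖x - z‖ := le_trans (le_abs_self _) (hLip x z)
    have h2 : 0 ≤ (‖x - z‖ - L * lam) ^ 2 / (2 * lam) :=
      div_nonneg (sq_nonneg _) hlam2.le
    have he : (‖x - z‖ - L * lam) ^ 2 / (2 * lam)
        = ‖x - z‖ ^ 2 / (2 * lam) - L * ‖x - z‖ + L ^ 2 * lam / 2 := by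
      field_simp
      ring
    linarith [he ▸ h2]
  have hbdd : ∀ x : EuclideanSpace ℝ (Fin n),
      BddBelow (Set.range fun z => g z + ‖x - z‖ ^ 2 / (2 * lam)) := by
    intro x
    exact ⟨g x - L ^ 2 * lam / 2, by rintro y ⟨z, rfl⟩; exact hlow x z⟩
  have hle : ∀ x, mye g lam x ≤ g x := by
    intro x
    have := ciInf_le (hbdd x) x
    simpa [mye] using this
  have hge : ∀ x, g x - L ^ 2 * lam / 2 ≤ mye g lam x := fun x =>
    le_ciInf (hlow x)
  -- Lipschitz continuity of mye
  have hmlip : ∀ x y, mye g lam x - mye g lam y ≤ |L| * ‖x - y‖ := by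
    intro x y
    have hy : mye g lam y = ⨅ z, (g z + ‖y - z‖ ^ 2 / (2 * lam)) := rfl
    have key : mye g lam x ≤ (⨅ z, (g z + ‖y - z‖ ^ 2 / (2 * lam))) + |L| * ‖x - y‖ := by
      refine le_ciInf_add fun z => ?_
      have h1 : mye g lam x ≤ g (z + (x - y)) + ‖x - (z + (x - y))‖ ^ 2 / (2 * lam) :=
        ciInf_le (hbdd x) (z + (x - y))
      have hxz : x - (z + (x - y)) = y - z := by abel
      have h2 : g (z + (x - y)) - g z ≤ L * ‖x - y‖ := by
        have := le_trans (le_abs_self _) (hLip (z + (x - y)) z)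
        simpa using this
      have h3 : L * ‖x - y‖ ≤ |L| * ‖x - y‖ :=
        mul_le_mul_of_nonneg_right (le_abs_self L) (norm_nonneg _)
      rw [hxz] at h1
      linarith
    linarith [hy ▸ key]
  have hcont : Continuous (mye g lam) := by
    refine (LipschitzWith.continuous (K := ‖L‖₊) ?_)
    rw [lipschitzWith_iff_dist_le_mul]
    intro x y
    rw [Real.dist_eq, dist_eq_norm]
    have h1 := hmlip x y
    have h2 := hmlip y x
    rw [abs_sub_le_iff]
    constructor
    · simpa [coe_nnnorm, Real.norm_eq_abs] using h1
    · rw [← norm_neg, neg_sub]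
      simpa [coe_nnnorm, Real.norm_eq_abs] using h2
  have hgcont : Continuous g := by
    refine (LipschitzWith.continuous (K := ‖L‖₊) ?_)
    rw [lipschitzWith_iff_dist_le_mul]
    intro x y
    rw [Real.dist_eq, dist_eq_norm]
    calc |g x - g y| ≤ L * ‖x - y‖ := hLip x y
      _ ≤ |L| * ‖x - y‖ := mul_le_mul_of_nonneg_right (le_abs_self L) (norm_nonneg _)
      _ = ‖L‖₊ * ‖x - y‖ := by simp [coe_nnnorm, Real.norm_eq_abs]
  have hg_int : Integrable (fun x : EuclideanSpace ℝ (Fin n) => Real.exp (-g x)) := by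
    by_contra h
    rw [integral_undef h] at hnorm
    exact one_ne_zero hnorm.symm
  set c := Real.exp (L ^ 2 * lam / 2) with hc
  have hptlow : ∀ x, Real.exp (-g x) ≤ Real.exp (-(mye g lam x)) := fun x =>
    Real.exp_le_exp.mpr (by linarith [hle x])
  have hpthigh : ∀ x, Real.exp (-(mye g lam x)) ≤ c * Real.exp (-g x) := by
    intro x
    rw [hc, ← Real.exp_add]
    exact Real.exp_le_exp.mpr (by linarith [hge x])
  have hmeas : AEStronglyMeasurable
      (fun x : EuclideanSpace ℝ (Fin n) => Real.exp (-(mye g lam x))) volume :=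
    (Real.continuous_exp.comp hcont.neg).aestronglyMeasurable
  have hmye_int : Integrable
      (fun x : EuclideanSpace ℝ (Fin n) => Real.exp (-(mye g lam x))) := by
    refine Integrable.mono' (hg_int.const_mul c) hmeas (ae_of_all _ fun x => ?_)
    rw [Real.norm_eq_abs, abs_of_pos (Real.exp_pos _)]
    exact hpthigh x
  constructor
  · calc (1:ℝ) = ∫ x : EuclideanSpace ℝ (Fin n), Real.exp (-g x) := hnorm.symm
      _ ≤ _ := integral_mono hg_int hmye_int hptlow
  · calc (∫ z : EuclideanSpace ℝ (Fin n), Real.exp (-(mye g lam z)))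
        ≤ ∫ x : EuclideanSpace ℝ (Fin n), c * Real.exp (-g x) :=
          integral_mono hmye_int (hg_int.const_mul c) hpthigh
      _ = c := by rw [integral_const_mul, hnorm, mul_one]
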